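/- arXiv:2506.17593 — 3 statements merged into one kernel-verified Lean document; each statement's English description precedes it below -/
import Mathlib

section
/- For every integer $k \geq 1$ and all integers $0 \leq a, b \leq k-1$, one has $k\cdot\max(a,b) - (a^2+b^2-ab) \leq k\cdot\lfloor 2k/3 \rfloor - \left(\lfloor 2k/3\rfloor^2 + \lfloor k/3\rfloor^2 - \lfloor 2k/3\rfloor\lfloor k/3\rfloor\right)$. -/
lemma stmt8_prod (c : ℤ) : 0 ≤ c * (c - 1) := by
  rcases le_or_gt c 0 with h | h
  · nlinarith
  · nlinarith

lemma stmt8_aux (k a b : ℤ) (hk : 1 ≤ k) (ha : a ≤ k - 1) (hba : b ≤ a) :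
    k * a - (a ^ 2 + b ^ 2 - a * b)
      ≤ k * (2 * k / 3) - ((2 * k / 3) ^ 2 + (k / 3) ^ 2 - (2 * k / 3) * (k / 3)) := by
  have h3 : k % 3 = 0 ∨ k % 3 = 1 ∨ k % 3 = 2 := by omega
  set q := k / 3 with hq
  rcases h3 with h | h | h
  · have hk3 : k = 3 * q := by omega
    have hA : 2 * k / 3 = 2 * q := by omega
    rw [hA, hk3]
    nlinarith [sq_nonneg (2 * b - a), sq_nonneg (a - 2 * q)]
  · have hk3 : k = 3 * q + 1 := by omega
    have hA : 2 * k / 3 = 2 * q := by omega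
    rw [hA, hk3]
    rcases lt_trichotomy a (2 * q + 1) with hc | hc | hc
    · nlinarith [sq_nonneg (2 * b - a), mul_nonneg (by omega : (0:ℤ) ≤ 2 * q - a)
        (by omega : (0:ℤ) ≤ 6 * q + 4 - 3 * a)]
    · subst hc
      nlinarith [stmt8_prod (b - q)]
    · nlinarith [sq_nonneg (2 * b - a), mul_nonneg (by omega : (0:ℤ) ≤ a - 2 * q)
        (by omega : (0:ℤ) ≤ 3 * a - 6 * q - 4)]
  · have hk3 : k = 3 * q + 2 := by omega
    have hA : 2 * k / 3 = 2 * q + 1 := by omega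
    rw [hA, hk3]
    rcases lt_trichotomy a (2 * q + 1) with hc | hc | hc
    · nlinarith [sq_nonneg (2 * b - a), mul_nonneg (by omega : (0:ℤ) ≤ 2 * q + 2 - a)
        (by omega : (0:ℤ) ≤ 6 * q + 2 - 3 * a)]
    · subst hc
      nlinarith [stmt8_prod (b - q)]
    · nlinarith [sq_nonneg (2 * b - a), mul_nonneg (by omega : (0:ℤ) ≤ a - 2 * q - 2)
        (by omega : (0:ℤ) ≤ 3 * a - 6 * q - 2)]

/-- The maximal conformal weight among the modules `M^{0,0-(a,b)}` of `K(sl₃,k)` is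
attained at `(⌊2k/3⌋, ⌊k/3⌋)`. -/
theorem stmt8 (k a b : ℤ) (hk : 1 ≤ k) (ha0 : 0 ≤ a) (ha : a ≤ k - 1)
    (hb0 : 0 ≤ b) (hb : b ≤ k - 1) :
    k * max a b - (a ^ 2 + b ^ 2 - a * b)
      ≤ k * (2 * k / 3) - ((2 * k / 3) ^ 2 + (k / 3) ^ 2 - (2 * k / 3) * (k / 3)) := by
  rcases le_total b a with h | h
  · rw [max_eq_left h]
    exact stmt8_aux k a b hk ha h
  · rw [max_eq_right h]
    have := stmt8_aux k b a hk hb h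
    linarith [this]
end

section
/- Let $r \geq 1$ and $k \geq 2$ be integers. For every tuple $(a_1,\ldots,a_r)$ of integers with $0 \leq a_i \leq k-1$ for all $i$, not all zero, one has $\sum_{i=1}^r a_i^2 - \sum_{1 \leq i < j \leq r} a_i a_j \;\leq\; k \cdot \max_{1\leq i \leq r} a_i \;-\; (k-1)$. -/
/-- For `r ≥ 1`, `k ≥ 2`, and a not-all-zero tuple `0 ≤ aᵢ ≤ k-1`:
`∑ aᵢ² - ∑_{i<j} aᵢaⱼ ≤ k·max aᵢ - (k-1)`. -/
theorem stmt9 (r : ℕ) (k : ℤ) (hr : 0 < r) (hk : 2 ≤ k)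
    (a : Fin r → ℤ) (ha : ∀ i, 0 ≤ a i ∧ a i ≤ k - 1) (hne : a ≠ 0) :
    (∑ i, (a i) ^ 2) - (∑ i, ∑ j, if i < j then a i * a j else 0)
      ≤ k * Finset.univ.sup' (Finset.univ_nonempty_iff.mpr (Fin.pos_iff_nonempty.mp hr)) a
          - (k - 1) := by
  set ne : (Finset.univ : Finset (Fin r)).Nonempty :=
    Finset.univ_nonempty_iff.mpr (Fin.pos_iff_nonempty.mp hr) with hne'
  set M := Finset.univ.sup' ne a with hM
  set Q := ∑ i, (a i) ^ 2 with hQ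
  set P := ∑ i, ∑ j, if i < j then a i * a j else 0 with hP
  set S := ∑ i, a i with hS
  -- identity 2P = S^2 - Q
  have h1 : S ^ 2 = ∑ i, ∑ j, a i * a j := by
    rw [hS, sq, Finset.sum_mul_sum]
  have h2 : ∀ i j : Fin r, a i * a j =
      (if i < j then a i * a j else 0) + (if j < i then a i * a j else 0)
        + (if i = j then a i * a j else 0) := by
    intro i j
    rcases lt_trichotomy i j with h | h | h
    · simp [h, h.ne, not_lt_of_gt h]
    · simp [h, lt_irrefl]
    · simp [h, h.ne', not_lt_of_gt h]
  have h3 : (∑ i, ∑ j, if j < i then a i * a j else 0) = P := by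
    rw [Finset.sum_comm, hP]
    apply Finset.sum_congr rfl; intro i _
    apply Finset.sum_congr rfl; intro j _
    rw [mul_comm]
  have h4 : (∑ i, ∑ j, if i = j then a i * a j else 0) = Q := by
    rw [hQ]
    apply Finset.sum_congr rfl; intro i _
    simp [Finset.sum_ite_eq, sq]
  have key : 2 * P = S ^ 2 - Q := by
    rw [h1]
    have : (∑ i, ∑ j, a i * a j)
        = (∑ i, ∑ j, if i < j then a i * a j else 0)
          + (∑ i, ∑ j, if j < i then a i * a j else 0)
          + (∑ i, ∑ j, if i = j then a i * a j else 0) := by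
      rw [← Finset.sum_add_distrib, ← Finset.sum_add_distrib]
      apply Finset.sum_congr rfl; intro i _
      rw [← Finset.sum_add_distrib, ← Finset.sum_add_distrib]
      exact Finset.sum_congr rfl fun j _ => h2 i j
    rw [this, h3, h4]; ring
  -- max attained
  obtain ⟨i0, -, hi0⟩ := Finset.exists_mem_eq_sup' ne a
  have hle : ∀ j, a j ≤ M := fun j => Finset.le_sup' a (Finset.mem_univ j)
  have hM1 : 1 ≤ M := by
    obtain ⟨i, hi⟩ := Function.ne_iff.mp hne
    have := (ha i).1
    have : 1 ≤ a i := lt_of_le_of_ne this (Ne.symm hi)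
    exact this.trans (hle i)
  have hMa : a i0 = M := hi0.symm
  have hMk : M ≤ k - 1 := hMa ▸ (ha i0).2
  -- split off i0
  set T := ∑ j ∈ Finset.univ.erase i0, a j with hT
  set QT := ∑ j ∈ Finset.univ.erase i0, (a j) ^ 2 with hQT
  have hST : S = M + T := by
    rw [hS, hT, ← Finset.add_sum_erase _ a (Finset.mem_univ i0), hMa]
  have hQQ : Q = M ^ 2 + QT := by
    rw [hQ, hQT, ← Finset.add_sum_erase _ (fun j => a j ^ 2) (Finset.mem_univ i0), hMa]
  have hT0 : 0 ≤ T := Finset.sum_nonneg fun j _ => (ha j).1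
  have hQT1 : QT ≤ T ^ 2 := by
    rw [hQT, hT]
    exact Finset.sum_sq_le_sq_sum_of_nonneg fun j _ => (ha j).1
  have hQT2 : QT ≤ M * T := by
    rw [hQT, hT, Finset.mul_sum]
    apply Finset.sum_le_sum
    intro j _
    rw [sq]
    exact mul_le_mul_of_nonneg_right (hle j) (ha j).1
  have hmain : 3 * Q - S ^ 2 ≤ 2 * M ^ 2 := by
    rcases le_total T M with h | h
    · nlinarith [mul_nonneg hT0 (sub_nonneg.mpr h)]
    · nlinarith [mul_nonneg hT0 (sub_nonneg.mpr h)]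
  nlinarith [mul_nonneg (sub_nonneg.mpr hM1) (sub_nonneg.mpr hMk)]
end

section
/- Let $r \geq 3$ and $k \geq 1$ be integers. For every tuple $(a_1,\ldots,a_r)$ of integers with $0 \leq a_i \leq k-1$, define $f(a_\bullet) = k\cdot\max_i a_i - \left(\sum_{i=1}^r a_i^2 - \sum_{1\leq i<j\leq r} a_i a_j\right)$. Then $f(a_\bullet) \leq f(k-1, k-1, \ldots, k-1) = k(k-1) + (k-1)^2\,\frac{r(r-3)}{2}$. -/
/-- `f(a_•) = k·maxᵢ aᵢ - (∑ aᵢ² - ∑_{i<j} aᵢaⱼ)`. -/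
def pf10 (r : ℕ) (hr : 0 < r) (k : ℤ) (a : Fin r → ℤ) : ℤ :=
  k * Finset.univ.sup' (Finset.univ_nonempty_iff.mpr (Fin.pos_iff_nonempty.mp hr)) a
    - ((∑ i, (a i) ^ 2) - (∑ i, ∑ j, if i < j then a i * a j else 0))


lemma double_sum_aux (r : ℕ) (a : Fin r → ℤ) :
    2 * (∑ i, ∑ j, if i < j then a i * a j else 0)
      = (∑ i, a i) ^ 2 - ∑ i, (a i) ^ 2 := by
  have hsq : (∑ i, a i) ^ 2 = ∑ i, ∑ j, a i * a j := by
    rw [sq, Finset.sum_mul_sum]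
  have hsplit : ∀ i j : Fin r, a i * a j =
      (if i < j then a i * a j else 0) + (if j < i then a i * a j else 0)
        + (if i = j then a i * a j else 0) := by
    intro i j
    rcases lt_trichotomy i j with h | h | h
    · simp [h, not_lt.mpr h.le, h.ne]
    · simp [h]
    · simp [h, not_lt.mpr h.le, h.ne']
  have hswap : (∑ i, ∑ j, if j < i then a i * a j else 0)
      = ∑ i, ∑ j, if i < j then a i * a j else 0 := by
    rw [Finset.sum_comm]
    refine Finset.sum_congr rfl fun i _ => Finset.sum_congr rfl fun j _ => ?_
    rw [mul_comm]
  have hdiag : (∑ i, ∑ j, if i = j then a i * a j else 0) = ∑ i, (a i) ^ 2 := by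
    refine Finset.sum_congr rfl fun i _ => ?_
    rw [Finset.sum_ite_eq]
    simp [sq]
  symm
  calc (∑ i, a i) ^ 2 - ∑ i, (a i) ^ 2
      = (∑ i, ∑ j, ((if i < j then a i * a j else 0) + (if j < i then a i * a j else 0)
          + (if i = j then a i * a j else 0))) - ∑ i, (a i) ^ 2 := by
        rw [hsq]
        congr 1
        exact Finset.sum_congr rfl fun i _ => Finset.sum_congr rfl fun j _ => hsplit i j
    _ = 2 * (∑ i, ∑ j, if i < j then a i * a j else 0) := by
        simp only [Finset.sum_add_distrib, hswap, hdiag]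
        ring

/-- For `r ≥ 3`, `k ≥ 1`: `f(a_•) ≤ f(k-1,…,k-1) = k(k-1) + (k-1)² r(r-3)/2`. -/
theorem stmt10 (r : ℕ) (k : ℤ) (hr : 3 ≤ r) (hk : 1 ≤ k)
    (a : Fin r → ℤ) (ha : ∀ i, 0 ≤ a i ∧ a i ≤ k - 1) :
    pf10 r (by omega) k a ≤ pf10 r (by omega) k (fun _ => k - 1) ∧
    2 * pf10 r (by omega) k (fun _ => k - 1)
      = 2 * (k * (k - 1)) + (k - 1) ^ 2 * ((r : ℤ) * ((r : ℤ) - 3)) := by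
  have hr0 : 0 < r := by omega
  have hne : (Finset.univ : Finset (Fin r)).Nonempty :=
    Finset.univ_nonempty_iff.mpr (Fin.pos_iff_nonempty.mp hr0)
  have key : ∀ b : Fin r → ℤ, 2 * pf10 r hr0 k b
      = 2 * (k * Finset.univ.sup' hne b) + (∑ i, b i) ^ 2 - 3 * ∑ i, (b i) ^ 2 := by
    intro b
    have := double_sum_aux r b
    unfold pf10
    linarith
  have hconst : 2 * pf10 r hr0 k (fun _ => k - 1)
      = 2 * (k * (k - 1)) + (k - 1) ^ 2 * ((r : ℤ) * ((r : ℤ) - 3)) := by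
    rw [key]
    rw [Finset.sup'_const]
    simp [Finset.card_univ]
    ring
  constructor
  · have hcancel : ∀ x y : ℤ, 2 * x ≤ 2 * y → x ≤ y := by intro x y; omega
    apply hcancel
    rw [key, hconst]
    set s := ∑ i, a i with hs
    set q := ∑ i, (a i) ^ 2 with hq
    have hcs : s ^ 2 ≤ (r : ℤ) * q := by
      have := sq_sum_le_card_mul_sum_sq (s := (Finset.univ : Finset (Fin r))) (f := a)
      simpa [Finset.card_univ] using this
    have hs0 : 0 ≤ s := Finset.sum_nonneg fun i _ => (ha i).1
    have hsle : s ≤ (r : ℤ) * (k - 1) := by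
      calc s ≤ ∑ _i : Fin r, (k - 1) := Finset.sum_le_sum fun i _ => (ha i).2
        _ = (r : ℤ) * (k - 1) := by simp [Finset.card_univ, mul_comm]; ring
    have hM : Finset.univ.sup' hne a ≤ k - 1 :=
      Finset.sup'_le _ _ fun i _ => (ha i).2
    have hM0 : 0 ≤ Finset.univ.sup' hne a := by
      obtain ⟨i⟩ := Fin.pos_iff_nonempty.mp hr0
      exact le_trans (ha i).1 (Finset.le_sup' a (Finset.mem_univ i))
    have hrge : (3 : ℤ) ≤ (r : ℤ) := by exact_mod_cast hr
    have hk0 : (0 : ℤ) < k := by omega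
    have hkm : k * Finset.univ.sup' hne a ≤ k * (k - 1) :=
      mul_le_mul_of_nonneg_left hM (le_of_lt hk0)
    -- r * (s^2 - 3q) ≤ r * ((k-1)^2 * r * (r-3))
    have hr' : (0 : ℤ) < (r : ℤ) := by exact_mod_cast hr0
    nlinarith [mul_nonneg (sub_nonneg.mpr hrge) (mul_nonneg (sub_nonneg.mpr hsle) (by linarith : (0:ℤ) ≤ (r:ℤ) * (k-1) + s)), hcs, mul_pos hr' hr']
  · exact hconst
end
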